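/- In a graph H that is obtained from a tree by adding at most m extra edges, the number of non-backtracking walks of a fixed length k between any two fixed vertices is at most (1+2m)^k. -/

import Mathlib

open SimpleGraph

/-- A walk is non-backtracking if it never immediately retraces an edge,
i.e. the vertex two steps later always differs from the current one. -/
def NonBacktracking {V : Type*} {H : SimpleGraph V} {u v : V} (w : H.Walk u v) : Prop :=
  ∀ i : ℕ, i + 2 ≤ w.length → w.getVert (i + 2) ≠ w.getVert i

section Aux

variable {V : Type*}

private lemma walk_ext {G : SimpleGraph V} {u v : V} (p : G.Walk u v) :
    ∀ (q : G.Walk u v), p.length = q.length → (∀ i, p.getVert i = q.getVert i) → p = q := by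
  induction p with
  | nil =>
    intro q hl _
    cases q with
    | nil => rfl
    | cons h r => simp at hl
  | @cons a b c h p ih =>
    intro q hl hg
    cases q with
    | nil => simp at hl
    | @cons _ b' _ h' r =>
      have hxy : b = b' := by
        have h1 := hg 1
        simpa [Walk.getVert_cons_succ, Walk.getVert_zero] using h1
      subst hxy
      obtain rfl : p = r := by
        refine ih r ?_ ?_
        · simpa using hl
        · intro i
          have := hg (i + 1)
          simpa [Walk.getVert_cons_succ] using this
      rfl

private lemma nb_cons {G : SimpleGraph V} {u x v : V} (h : G.Adj u x) (p : G.Walk x v)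
    (hnb : NonBacktracking (Walk.cons h p)) : NonBacktracking p := by
  intro i hi
  have h1 := hnb (i + 1) (by simp [Walk.length_cons]; omega)
  rw [show i + 1 + 2 = (i + 2) + 1 by omega, Walk.getVert_cons_succ, Walk.getVert_cons_succ] at h1
  exact h1

private lemma nb_isPath {G : SimpleGraph V} (hG : G.IsAcyclic) {u v : V} (p : G.Walk u v) :
    NonBacktracking p → p.IsPath := by
  classical
  induction p with
  | nil => intro _; simp
  | cons h q ih =>
    rename_i u' x v'
    intro hnb
    have hq : q.IsPath := ih (nb_cons h q hnb)
    rw [Walk.cons_isPath_iff]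
    refine ⟨hq, fun ha => ?_⟩
    have hr : (q.takeUntil u' ha).IsPath := hq.takeUntil ha
    have hsing : (Walk.cons h Walk.nil).IsPath := by
      simp [Walk.cons_isPath_iff, h.ne]
    have hpath := isAcyclic_iff_path_unique.mp hG
      ⟨(q.takeUntil u' ha).reverse, hr.reverse⟩ ⟨Walk.cons h Walk.nil, hsing⟩
    have hrev : (q.takeUntil u' ha).reverse = Walk.cons h Walk.nil := Subtype.ext_iff.mp hpath
    have hr1 : q.takeUntil u' ha = (Walk.cons h Walk.nil).reverse := by
      rw [← hrev, Walk.reverse_reverse]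
    have hlr : (q.takeUntil u' ha).length = 1 := by rw [hr1]; simp
    have hspec := q.take_spec ha
    have hg1 : q.getVert 1 = u' := by
      conv_lhs => rw [← hspec]
      rw [Walk.getVert_append, hlr]
      simp
    have hql : 1 ≤ q.length := by
      rw [← hspec, Walk.length_append, hlr]; omega
    exact hnb 0 (by simp [Walk.length_cons]; omega)
      (by simp [Walk.getVert_cons_succ, hg1, Walk.getVert_zero])

private lemma nb_unique {G : SimpleGraph V} (hG : G.IsAcyclic) {u v : V} (p q : G.Walk u v)
    (hp : NonBacktracking p) (hq : NonBacktracking q) : p = q :=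
  Subtype.ext_iff.mp (isAcyclic_iff_path_unique.mp hG ⟨p, nb_isPath hG p hp⟩ ⟨q, nb_isPath hG q hq⟩)

private lemma exists_tree_prefix {H T : SimpleGraph V} {v : V} :
    ∀ (j : ℕ) {u : V} (w : H.Walk u v), j ≤ w.length →
      (∀ i < j, T.Adj (w.getVert i) (w.getVert (i + 1))) →
      ∃ p : T.Walk u (w.getVert j), p.length = j ∧ ∀ i ≤ j, p.getVert i = w.getVert i := by
  intro j
  induction j with
  | zero =>
    intro u w _ _
    refine ⟨Walk.nil.copy rfl (w.getVert_zero).symm, by simp, ?_⟩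
    intro i hi
    obtain rfl : i = 0 := Nat.le_zero.mp hi
    simp
  | succ j ih =>
    intro u w hj ht
    cases w with
    | nil => simp at hj
    | cons h q =>
      rename_i x
      obtain ⟨p, hpl, hpg⟩ := ih q (by simp [Walk.length_cons] at hj; omega)
        (fun i hi => by
          have := ht (i + 1) (by omega)
          simpa [Walk.getVert_cons_succ] using this)
      have hTadj : T.Adj u x := by
        have := ht 0 (by omega)
        simpa [Walk.getVert_zero, Walk.getVert_cons_succ] using this
      refine ⟨(Walk.cons hTadj p).copy rfl (Walk.getVert_cons_succ q h).symm, ?_, ?_⟩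
      · simp [hpl]
      · intro i hi
        cases i with
        | zero => simp
        | succ i =>
          rw [Walk.getVert_copy, Walk.getVert_cons_succ, Walk.getVert_cons_succ]
          exact hpg i (by omega)

private lemma exists_suffix {H : SimpleGraph V} {v : V} :
    ∀ (j : ℕ) {u : V} (w : H.Walk u v), j ≤ w.length →
      ∃ p : H.Walk (w.getVert j) v, p.length = w.length - j ∧
        ∀ i, p.getVert i = w.getVert (j + i) := by
  intro j
  induction j with
  | zero =>
    intro u w _
    exact ⟨w.copy (w.getVert_zero).symm rfl, by simp, fun i => by simp⟩
  | succ j ih =>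
    intro u w hj
    cases w with
    | nil => simp at hj
    | cons h q =>
      obtain ⟨p, hl, hg⟩ := ih q (by simp [Walk.length_cons] at hj; omega)
      refine ⟨p.copy (Walk.getVert_cons_succ q h).symm rfl, ?_, ?_⟩
      · rw [Walk.length_copy, hl, Walk.length_cons]; omega
      · intro i
        rw [Walk.getVert_copy, hg i, show j + 1 + i = (j + i) + 1 by omega,
          Walk.getVert_cons_succ]

private lemma sym2_mk_out {α : Type*} (e : Sym2 α) : s(e.out.1, e.out.2) = e :=
  Quot.out_eq e

open Classical in
/-- The code of the `i`-th step of a walk: `none` if it is a tree step,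
otherwise the directed pair of endpoints. -/
noncomputable def codeAt (T : SimpleGraph V) {H : SimpleGraph V} {u v : V}
    (w : H.Walk u v) (i : ℕ) : Option (V × V) :=
  if T.Adj (w.getVert i) (w.getVert (i + 1)) then none
  else some (w.getVert i, w.getVert (i + 1))

private lemma key {H T : SimpleGraph V} (hT : T.IsAcyclic) :
    ∀ (k : ℕ) {u v : V} (w1 w2 : H.Walk u v), w1.length = k → w2.length = k →
      NonBacktracking w1 → NonBacktracking w2 →
      (∀ i < k, codeAt T w1 i = codeAt T w2 i) → w1 = w2 := by
  intro k
  induction k using Nat.strong_induction_on with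
  | _ k ih =>
  intro u v w1 w2 hl1 hl2 hnb1 hnb2 hc
  by_cases hall : ∀ i < k, T.Adj (w1.getVert i) (w1.getVert (i + 1))
  · have hall2 : ∀ i < k, T.Adj (w2.getVert i) (w2.getVert (i + 1)) := by
      intro i hi
      have hci := hc i hi
      by_contra hcon
      simp [codeAt, hall i hi, hcon] at hci
    obtain ⟨p1, hp1l, hp1g⟩ := exists_tree_prefix (T := T) k w1 hl1.ge hall
    obtain ⟨p2, hp2l, hp2g⟩ := exists_tree_prefix (T := T) k w2 hl2.ge hall2
    have he1 : w1.getVert k = v := by rw [← hl1]; exact w1.getVert_length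
    have he2 : w2.getVert k = v := by rw [← hl2]; exact w2.getVert_length
    have hnbp1 : NonBacktracking (p1.copy rfl he1) := by
      intro i hi
      rw [Walk.length_copy, hp1l] at hi
      rw [Walk.getVert_copy, Walk.getVert_copy, hp1g _ hi, hp1g _ (by omega)]
      exact hnb1 i (by omega)
    have hnbp2 : NonBacktracking (p2.copy rfl he2) := by
      intro i hi
      rw [Walk.length_copy, hp2l] at hi
      rw [Walk.getVert_copy, Walk.getVert_copy, hp2g _ hi, hp2g _ (by omega)]
      exact hnb2 i (by omega)
    have hpq := nb_unique hT _ _ hnbp1 hnbp2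
    apply walk_ext w1 w2 (by omega)
    intro i
    by_cases hik : i ≤ k
    · have e1 : (p1.copy rfl he1).getVert i = w1.getVert i := by
        rw [Walk.getVert_copy]; exact hp1g i hik
      have e2 : (p2.copy rfl he2).getVert i = w2.getVert i := by
        rw [Walk.getVert_copy]; exact hp2g i hik
      rw [← e1, ← e2, hpq]
    · rw [w1.getVert_of_length_le (by omega), w2.getVert_of_length_le (by omega)]
  · push_neg at hall
    have hex : ∃ i, i < k ∧ ¬T.Adj (w1.getVert i) (w1.getVert (i + 1)) := by
      obtain ⟨i, hi, hne⟩ := hall; exact ⟨i, hi, hne⟩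
    classical
    set j := Nat.find hex with hjdef
    obtain ⟨hjk, hjadj⟩ := Nat.find_spec hex
    have hmin : ∀ i < j, T.Adj (w1.getVert i) (w1.getVert (i + 1)) := by
      intro i hi
      by_contra hcon
      exact Nat.find_min hex hi ⟨by omega, hcon⟩
    have hcj := hc j hjk
    have hj2adj : ¬T.Adj (w2.getVert j) (w2.getVert (j + 1)) := by
      intro hcon
      simp [codeAt, hjadj, hcon] at hcj; exact hjadj hcj
    have hpair : w2.getVert j = w1.getVert j ∧ w2.getVert (j + 1) = w1.getVert (j + 1) := by
      simp only [codeAt, if_neg (show ¬T.Adj (w1.getVert j) (w1.getVert (j + 1)) from hjadj), if_neg hj2adj, Option.some.injEq, Prod.mk.injEq] at hcj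
      exact ⟨hcj.1.symm, hcj.2.symm⟩
    have hmin2 : ∀ i < j, T.Adj (w2.getVert i) (w2.getVert (i + 1)) := by
      intro i hi
      have hci := hc i (by omega)
      by_contra hcon
      simp [codeAt, hmin i hi, hcon] at hci
    have hpre : ∀ i ≤ j, w1.getVert i = w2.getVert i := by
      obtain ⟨p1, hp1l, hp1g⟩ := exists_tree_prefix (T := T) j w1 (by omega) hmin
      obtain ⟨p2, hp2l, hp2g⟩ := exists_tree_prefix (T := T) j w2 (by omega) hmin2
      have hnbp1 : NonBacktracking p1 := by
        intro i hi
        rw [hp1l] at hi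
        rw [hp1g _ hi, hp1g _ (by omega)]
        exact hnb1 i (by omega)
      have hnbp2 : NonBacktracking (p2.copy rfl hpair.1) := by
        intro i hi
        rw [Walk.length_copy, hp2l] at hi
        rw [Walk.getVert_copy, Walk.getVert_copy, hp2g _ hi, hp2g _ (by omega)]
        exact hnb2 i (by omega)
      have hpq := nb_unique hT _ _ hnbp1 hnbp2
      intro i hi
      rw [← hp1g i hi, hpq, Walk.getVert_copy, hp2g i hi]
    obtain ⟨s1, hs1l, hs1g⟩ := exists_suffix (j + 1) w1 (by omega)
    obtain ⟨s2, hs2l, hs2g⟩ := exists_suffix (j + 1) w2 (by omega)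
    have hnbs1 : NonBacktracking s1 := by
      intro i hi
      rw [hs1l] at hi
      have h1 := hnb1 (j + 1 + i) (by omega)
      rw [show j + 1 + i + 2 = j + 1 + (i + 2) by omega] at h1
      rw [hs1g, hs1g]
      exact h1
    have hnbs2 : NonBacktracking (s2.copy hpair.2 rfl) := by
      intro i hi
      rw [Walk.length_copy, hs2l] at hi
      have h1 := hnb2 (j + 1 + i) (by omega)
      rw [show j + 1 + i + 2 = j + 1 + (i + 2) by omega] at h1
      rw [Walk.getVert_copy, Walk.getVert_copy, hs2g, hs2g]
      exact h1
    have hcs : ∀ i < k - (j + 1), codeAt T s1 i = codeAt T (s2.copy hpair.2 rfl) i := by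
      intro i hi
      have hci := hc (j + 1 + i) (by omega)
      have e1 : s1.getVert i = w1.getVert (j + 1 + i) := hs1g i
      have e2 : s1.getVert (i + 1) = w1.getVert (j + 1 + i + 1) := by
        rw [hs1g]; first | rfl | (congr 1; omega)
      have e3 : (s2.copy hpair.2 rfl).getVert i = w2.getVert (j + 1 + i) := by
        rw [Walk.getVert_copy]; exact hs2g i
      have e4 : (s2.copy hpair.2 rfl).getVert (i + 1) = w2.getVert (j + 1 + i + 1) := by
        rw [Walk.getVert_copy, hs2g]; first | rfl | (congr 1; omega)
      simp only [codeAt, e1, e2, e3, e4]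
      simpa only [codeAt] using hci
    have hsuf := ih (k - (j + 1)) (by omega) s1 (s2.copy hpair.2 rfl)
      (by omega) (by rw [Walk.length_copy]; omega) hnbs1 hnbs2 hcs
    apply walk_ext w1 w2 (by omega)
    intro i
    rcases le_or_gt i j with hij | hij
    · exact hpre i hij
    · have hi' : i = j + 1 + (i - (j + 1)) := by omega
      rw [hi', ← hs1g, ← hs2g, hsuf, Walk.getVert_copy]

end Aux

/-- In a graph `H` obtained from a (spanning) tree by adding at most `m` extra edges,
the number of non-backtracking walks of any fixed length `k` between two fixed
vertices is at most `(1 + 2m)^k`. -/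
theorem nonBacktracking_walks_le {V : Type*} [Fintype V] (H T : SimpleGraph V)
    (hT : T.IsTree) (hle : T ≤ H) (m : ℕ) (hm : (H.edgeSet \ T.edgeSet).ncard ≤ m)
    (u v : V) (k : ℕ) :
    Nat.card {w : H.Walk u v // w.length = k ∧ NonBacktracking w} ≤ (1 + 2 * m) ^ k := by
  classical
  set D := {p : V × V // H.Adj p.1 p.2 ∧ ¬T.Adj p.1 p.2} with hD
  set E := (H.edgeSet \ T.edgeSet : Set (Sym2 V)) with hE
  -- the encoding map
  set F : {w : H.Walk u v // w.length = k ∧ NonBacktracking w} → (Fin k → Option D) :=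
    fun w i =>
      if h : T.Adj (w.1.getVert i) (w.1.getVert (i + 1)) then none
      else some ⟨(w.1.getVert i, w.1.getVert (i + 1)),
        w.1.adj_getVert_succ (by rw [w.2.1]; exact i.2), h⟩ with hF
  have hinj : Function.Injective F := by
    intro a b hab
    apply Subtype.ext
    refine key hT.IsAcyclic k a.1 b.1 a.2.1 b.2.1 a.2.2 b.2.2 ?_
    intro i hi
    have h' := congrFun hab ⟨i, hi⟩
    simp only [hF] at h'
    by_cases h1 : T.Adj (a.1.getVert i) (a.1.getVert (i + 1)) <;>
      by_cases h2 : T.Adj (b.1.getVert i) (b.1.getVert (i + 1))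
    · simp [codeAt, h1, h2]
    · rw [dif_pos h1, dif_neg h2] at h'; simp at h'
    · rw [dif_neg h1, dif_pos h2] at h'; simp at h'
    · rw [dif_neg h1, dif_neg h2] at h'
      have h3 : ((a.1.getVert i, a.1.getVert (i + 1)) : V × V)
          = (b.1.getVert i, b.1.getVert (i + 1)) :=
        congrArg Subtype.val (Option.some.inj h')
      rw [Prod.ext_iff] at h3
      simp [codeAt, h1, h2]
      exact ⟨h3.1, h3.2⟩
  -- cardinality of D
  have hDcard : Nat.card D ≤ 2 * m := by
    have hmap : Function.Injective (fun d : D =>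
        ((⟨s(d.1.1, d.1.2), d.2.1, fun hmem => d.2.2 (T.mem_edgeSet.mp hmem)⟩ : E),
          (if d.1 = (s(d.1.1, d.1.2) : Sym2 V).out then true else false))) := by
      intro d d' hdd
      simp only [Prod.mk.injEq, Subtype.mk.injEq] at hdd
      obtain ⟨he, hb⟩ := hdd
      have alt : ∀ x : D, x.1 = (s(x.1.1, x.1.2) : Sym2 V).out ∨
          x.1 = ((s(x.1.1, x.1.2) : Sym2 V).out).swap := by
        intro x
        have h0 : s(((s(x.1.1, x.1.2) : Sym2 V).out).1, ((s(x.1.1, x.1.2) : Sym2 V).out).2)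
            = s(x.1.1, x.1.2) := sym2_mk_out _
        rcases Sym2.eq_iff.mp h0 with ⟨h1, h2⟩ | ⟨h1, h2⟩
        · left; exact Prod.ext h1.symm h2.symm
        · right; exact Prod.ext h2.symm h1.symm
      have hneq : ∀ x : D, ((s(x.1.1, x.1.2) : Sym2 V).out).1 ≠
          ((s(x.1.1, x.1.2) : Sym2 V).out).2 := by
        intro x
        have h0 := sym2_mk_out (s(x.1.1, x.1.2) : Sym2 V)
        have hadj : H.Adj ((s(x.1.1, x.1.2) : Sym2 V).out).1 ((s(x.1.1, x.1.2) : Sym2 V).out).2 :=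
          H.mem_edgeSet.mp (by rw [h0]; exact H.mem_edgeSet.mpr x.2.1)
        exact hadj.ne
      have hoo : (s(d.1.1, d.1.2) : Sym2 V).out = (s(d'.1.1, d'.1.2) : Sym2 V).out := congrArg (fun e : E => (e.1 : Sym2 V).out) he
      rcases alt d with h1 | h1 <;> rcases alt d' with h2 | h2
      · apply Subtype.ext; rw [h1, h2, hoo]
      · exfalso
        have hcond : ¬ d'.1 = (s(d'.1.1, d'.1.2) : Sym2 V).out := by
          intro hcon
          have hsw : ((s(d'.1.1, d'.1.2) : Sym2 V).out).swap = (s(d'.1.1, d'.1.2) : Sym2 V).out :=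
            h2.symm.trans hcon
          exact hneq d' (congrArg Prod.fst hsw).symm
        rw [if_pos h1, if_neg hcond] at hb
        simp at hb
      · exfalso
        have hcond : ¬ d.1 = (s(d.1.1, d.1.2) : Sym2 V).out := by
          intro hcon
          have hsw : ((s(d.1.1, d.1.2) : Sym2 V).out).swap = (s(d.1.1, d.1.2) : Sym2 V).out :=
            h1.symm.trans hcon
          exact hneq d (congrArg Prod.fst hsw).symm
        rw [if_neg hcond, if_pos h2] at hb
        simp at hb
      · apply Subtype.ext; rw [h1, h2, hoo]
    calc Nat.card D ≤ Nat.card (E × Bool) := Nat.card_le_card_of_injective _ hmap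
      _ = E.ncard * 2 := by
          rw [Nat.card_prod, Nat.card_coe_set_eq]
          simp [Nat.card_eq_fintype_card]
      _ ≤ m * 2 := by
          have : E.ncard ≤ m := hm
          omega
      _ = 2 * m := by omega
  calc Nat.card {w : H.Walk u v // w.length = k ∧ NonBacktracking w}
      ≤ Nat.card (Fin k → Option D) := Nat.card_le_card_of_injective F hinj
    _ = Nat.card (Option D) ^ k := by
        rw [Nat.card_fun]
        simp [Nat.card_eq_fintype_card]
    _ ≤ (1 + 2 * m) ^ k := by
        apply Nat.pow_le_pow_left
        rw [Finite.card_option]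
        omega
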